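/- Let π be a dominant integral weight, w a π-minuscule element, and λ = w(π). For β ∈ R^+, let u ∈ W^π denote the minimal-length representative of the coset s_β w W_π. Then: (a) λ →β s_β(λ) holds (i.e. ⟨λ, β∨⟩ = −1) if and only if u →β w; (b) if u →β w, then u is also π-minuscule. -/

import Mathlib

open scoped Classical BigOperators

/-- A bundled setting for a finite crystallographic root system together with its
Weyl group, its action on the rational span of the weight lattice, reflections,
and the data of coefficients of roots in the basis of simple roots. -/
structure WeylSetting where
  /-- index set of the Dynkin diagram (simple roots) -/
  I : Type
  [fintypeI : Fintype I]
  [decEqI : DecidableEq I]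
  /-- rational span of the weight lattice -/
  V : Type
  [acg : AddCommGroup V]
  [mod : Module ℚ V]
  /-- the Weyl group -/
  W : Type
  [grp : Group W]
  /-- the action of the Weyl group on weights -/
  act : W →* (V ≃ₗ[ℚ] V)
  /-- the simple roots -/
  simple : I → V
  /-- the (finite) set of roots -/
  roots : Finset V
  /-- `coroot β μ` is the pairing `⟨μ, β∨⟩` -/
  coroot : V → (V →ₗ[ℚ] ℚ)
  /-- the reflection `s_β ∈ W` associated to a root `β` -/
  srefl : V → W
  /-- coefficients of a positive root in the basis of simple roots -/
  posCoeff : V → I → ℕ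
  simple_mem : ∀ i, simple i ∈ roots
  simple_indep : LinearIndependent ℚ simple
  roots_neg : ∀ β ∈ roots, -β ∈ roots
  root_pos_or_neg : ∀ β ∈ roots,
    (∃ c : I → ℚ, (∀ i, 0 ≤ c i) ∧ β = ∑ i, c i • simple i) ∨
    (∃ c : I → ℚ, (∀ i, 0 ≤ c i) ∧ -β = ∑ i, c i • simple i)
  coroot_self : ∀ β ∈ roots, coroot β β = 2
  crystallographic : ∀ β ∈ roots, ∀ γ ∈ roots, ∃ n : ℤ, coroot β γ = n
  posCoeff_spec : ∀ β ∈ roots,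
    (∃ c : I → ℚ, (∀ i, 0 ≤ c i) ∧ β = ∑ i, c i • simple i) →
    β = ∑ i, (posCoeff β i : ℚ) • simple i
  srefl_apply : ∀ β ∈ roots, ∀ v : V, act (srefl β) v = v - coroot β v • β
  act_faithful : ∀ g : W, (∀ v : V, act g v = v) → g = 1
  roots_invariant : ∀ g : W, ∀ β ∈ roots, act g β ∈ roots
  coroot_equivariant : ∀ g : W, ∀ β ∈ roots, ∀ v : V,
    coroot (act g β) (act g v) = coroot β v
  generated : ∀ g : W, ∃ l : List I, g = (l.map fun i => srefl (simple i)).prod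

namespace WeylSetting

attribute [instance] fintypeI decEqI acg mod grp

variable (D : WeylSetting)

/-- the simple reflection attached to a node of the Dynkin diagram -/
def s (i : D.I) : D.W := D.srefl (D.simple i)

/-- the product `s_{i_1} ⋯ s_{i_r}` of the simple reflections listed in `l` -/
def wordProd (l : List D.I) : D.W := (l.map D.s).prod

/-- `β` is a positive root: a root which is a nonnegative combination of simple roots -/
def IsPosRoot (β : D.V) : Prop :=
  β ∈ D.roots ∧ ∃ c : D.I → ℚ, (∀ i, 0 ≤ c i) ∧ β = ∑ i, c i • D.simple i

/-- the length of a Weyl group element -/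
noncomputable def length (g : D.W) : ℕ :=
  sInf {n | ∃ l : List D.I, l.length = n ∧ D.wordProd l = g}

/-- `l` is a reduced word for `g` -/
def IsReduced (l : List D.I) (g : D.W) : Prop :=
  D.wordProd l = g ∧ l.length = D.length g

/-- the number of reduced words of `g` -/
noncomputable def RedCard (g : D.W) : ℕ := Nat.card {l : List D.I // D.IsReduced l g}

/-- the (strong) Bruhat order on the Weyl group -/
def bruhatLE : D.W → D.W → Prop :=
  Relation.ReflTransGen
    (fun a b => (∃ β, D.IsPosRoot β ∧ b = D.srefl β * a) ∧ D.length a < D.length b)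

/-- strict (strong) Bruhat order -/
def bruhatLT (a b : D.W) : Prop := D.bruhatLE a b ∧ a ≠ b

/-- the left weak Bruhat order: `a ≤_L b` iff `ℓ(b a⁻¹) + ℓ(a) = ℓ(b)` -/
def weakLE (a b : D.W) : Prop := D.length (b * a⁻¹) + D.length a = D.length b

/-- the height of a positive root: the sum of its coefficients in the simple roots -/
noncomputable def ht (β : D.V) : ℕ := ∑ i, D.posCoeff β i

/-- an integral weight: the pairings with all positive coroots are integers -/
def IsIntegral (lam : D.V) : Prop :=
  ∀ β, D.IsPosRoot β → ∃ n : ℤ, D.coroot β lam = n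

/-- a dominant integral weight -/
def IsDominant (lam : D.V) : Prop :=
  D.IsIntegral lam ∧ ∀ i, 0 ≤ D.coroot (D.simple i) lam

/-- a pre-dominant integral weight: `⟨λ, β∨⟩ ≥ -1` for all positive roots `β` -/
def IsPreDominant (lam : D.V) : Prop :=
  D.IsIntegral lam ∧ ∀ β, D.IsPosRoot β → -1 ≤ D.coroot β lam

/-- the diagram `D(λ) = {β ∈ R⁺ : ⟨λ, β∨⟩ = -1}` of a pre-dominant weight -/
noncomputable def diagram (lam : D.V) : Finset D.V :=
  D.roots.filter fun β => D.IsPosRoot β ∧ D.coroot β lam = -1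

/-- `IsWeightPath λ [β₁, …, β_r]` says that
`λ = λ₀ →β₁ λ₁ →β₂ ⋯ →β_r λ_r` is a `λ`-path, i.e. each `β_j` is a positive
root, `⟨λ_{j-1}, β_j∨⟩ = -1` and `λ_j = s_{β_j}(λ_{j-1})`. -/
def IsWeightPath : D.V → List D.V → Prop
  | _, [] => True
  | lam, β :: rest =>
      D.IsPosRoot β ∧ D.coroot β lam = -1 ∧
        IsWeightPath (D.act (D.srefl β) lam) rest

/-- the term `1/β₁ ⋅ 1/(β₁+β₂) ⋅ … ⋅ 1/(β₁+⋯+β_r)` attached to a path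
`(β₁, …, β_r)`, computed in a field `F` via a linear embedding `emb`. -/
noncomputable def pathTerm {F : Type} [Field F] [Algebra ℚ F]
    (emb : D.V →ₗ[ℚ] F) (l : List D.V) : F :=
  ∏ j ∈ Finset.range l.length, (emb ((l.take (j + 1)).sum))⁻¹

/-- `w` is a π-minuscule element (in the sense of Peterson). -/
def IsMinuscule (pi : D.V) (w : D.W) : Prop :=
  ∃ l : List D.I, D.IsReduced l w ∧
    ∀ k : Fin l.length,
      D.coroot (D.simple (l.get k)) (D.act (D.wordProd (l.drop (k.val + 1))) pi) = 1

/-- the stabilizer `W_π = Stab_W(π)` of a weight -/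
def stab (pi : D.V) : Subgroup D.W where
  carrier := {g | D.act g pi = pi}
  one_mem' := by simp
  mul_mem' := by
    intro a b ha hb
    simp only [Set.mem_setOf_eq] at *
    calc D.act (a * b) pi = D.act a (D.act b pi) := by rw [map_mul]; rfl
    _ = pi := by rw [hb, ha]
  inv_mem' := by
    intro a ha
    simp only [Set.mem_setOf_eq] at *
    calc D.act a⁻¹ pi = D.act a⁻¹ (D.act a pi) := by rw [ha]
    _ = D.act (a⁻¹ * a) pi := by rw [map_mul]; rfl
    _ = pi := by simp

/-- `u` is the minimal-length representative of its coset `uH` -/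
def IsMinRep (H : Subgroup D.W) (u : D.W) : Prop :=
  ∀ g : D.W, u⁻¹ * g ∈ H → D.length u ≤ D.length g

/-- `a` and `b` lie in the same coset of `H`, i.e. `aH = bH` -/
def SameCoset (H : Subgroup D.W) (a b : D.W) : Prop := a⁻¹ * b ∈ H

/-- `u →β w` in `W^P`: `β` is a positive root, `u, w` are minimal-length
representatives, `s_β w H = u H`, and `u < w` in Bruhat order -/
def Arrow (H : Subgroup D.W) (u w : D.W) (β : D.V) : Prop :=
  D.IsPosRoot β ∧ D.IsMinRep H u ∧ D.IsMinRep H w ∧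
    D.SameCoset H (D.srefl β * w) u ∧ D.bruhatLT u w

/-- `ArrowPath H w [β₁, …, β_r]` encodes a directed path
`x_r →β_r ⋯ → x_1 →β₁ x_0 = w` in the Bruhat graph on `W^P`. -/
def ArrowPath (H : Subgroup D.W) : D.W → List D.V → Prop
  | _, [] => True
  | w, β :: rest => ∃ u, D.Arrow H u w β ∧ ArrowPath H u rest

/-- directed paths as above whose vertices all lie above `v` in Bruhat order -/
def ArrowPathGE (H : Subgroup D.W) (v : D.W) : D.W → List D.V → Prop
  | _, [] => True
  | w, β :: rest => ∃ u, D.Arrow H u w β ∧ D.bruhatLE v u ∧ ArrowPathGE H v u rest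

/-- directed paths from `u` to `w`:
`u = x_r →β_r ⋯ → x_1 →β₁ x_0 = w` encoded by the list `[β₁, …, β_r]`. -/
def ArrowPathFromTo (H : Subgroup D.W) (u : D.W) : D.W → List D.V → Prop
  | w, [] => u = w
  | w, β :: rest => ∃ x, D.Arrow H x w β ∧ ArrowPathFromTo H u x rest

/-- `S(w) = {β ∈ R⁺ : s_β w < w}` -/
noncomputable def Sset (w : D.W) : Finset D.V :=
  D.roots.filter fun β => D.IsPosRoot β ∧ D.bruhatLT (D.srefl β * w) w

/-- `S(w/v) = {β ∈ R⁺ : v ≤ s_β w < w}` -/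
noncomputable def SsetSkew (v w : D.W) : Finset D.V :=
  D.roots.filter fun β =>
    D.IsPosRoot β ∧ D.bruhatLE v (D.srefl β * w) ∧ D.bruhatLT (D.srefl β * w) w

/-- an oriented edge `x → y` in the Bruhat graph of `G/P`: `x, y` are minimal
representatives, `xH < yH`, and `yH = x s_γ H` for some positive root `γ` -/
def GEdge (H : Subgroup D.W) (x y : D.W) : Prop :=
  D.IsMinRep H x ∧ D.IsMinRep H y ∧ D.bruhatLT x y ∧
    ∃ γ, D.IsPosRoot γ ∧ D.SameCoset H (x * D.srefl γ) y

/-- the (unique) positive root `γ` with `yH = x s_γ H` attached to an edge -/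
noncomputable def edgeRoot (H : Subgroup D.W) (x y : D.W) : D.V :=
  if h : ∃ γ, D.IsPosRoot γ ∧ D.SameCoset H (x * D.srefl γ) y then h.choose else 0

/-- `GChainTo H v t [x₁, …, x_r]` encodes a directed path
`v ≤ x_r → ⋯ → x_1 → x_0 = t` in the Bruhat graph of `G/P` -/
def GChainTo (H : Subgroup D.W) (v : D.W) : D.W → List D.W → Prop
  | _, [] => True
  | t, x :: rest => D.GEdge H x t ∧ D.bruhatLE v x ∧ GChainTo H v x rest

/-- the weighted term
`(m_Λ(x_r,x_{r-1})/W_Λ(x_r)) ⋯ (m_Λ(x_1,x_0)/W_Λ(x_1))` of a path in the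
`Λ`-Bruhat graph, computed in a field `F` via a linear embedding `emb`. -/
noncomputable def chainTerm {F : Type} [Field F] [Algebra ℚ F]
    (emb : D.V →ₗ[ℚ] F) (H : Subgroup D.W) (Lam : D.W → D.V) (w : D.W) :
    D.W → List D.W → F
  | _, [] => 1
  | t, x :: rest =>
      algebraMap ℚ F (D.coroot (D.edgeRoot H x t) (Lam x)) *
        (emb (D.act x (Lam x) - D.act w (Lam x)))⁻¹ *
        chainTerm emb H Lam w x rest

/-- the Bruhat order on cosets: `aH ≤ bH` -/
def cosetLE (H : Subgroup D.W) (a b : D.W) : Prop :=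
  ∃ x y, D.SameCoset H a x ∧ D.SameCoset H b y ∧ D.bruhatLE x y

/-- the (standard) parabolic subgroup generated by simple reflections in `J` -/
def parab (J : Set D.I) : Subgroup D.W := Subgroup.closure (D.s '' J)

/-- `X*(T)_P`: integral weights orthogonal to all coroots of `W_P`,
i.e. to `γ∨` for all positive roots `γ` in the span of the simple roots of `P` -/
def OrthWeightP (J : Set D.I) (lam : D.V) : Prop :=
  D.IsIntegral lam ∧
    ∀ γ, D.IsPosRoot γ → γ ∈ Submodule.span ℚ (D.simple '' J) → D.coroot γ lam = 0

/-- an admissible function `Λ : [v,w]^P → X*(T)_P` -/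
def Admissible (J : Set D.I) (v w : D.W) (Lam : D.W → D.V) : Prop :=
  (∀ x, D.IsMinRep (D.parab J) x → D.bruhatLE v x → D.bruhatLE x w →
      D.OrthWeightP J (Lam x)) ∧
  (∀ x, D.IsMinRep (D.parab J) x → D.bruhatLE v x → D.bruhatLE x w → x ≠ w →
      D.act x (Lam x) ≠ D.act w (Lam x))

/-- the subword of `l` with letters at the positions in `S`, in increasing order -/
def subwordF (l : List D.I) (S : Finset (Fin l.length)) : List D.I :=
  ((List.finRange l.length).filter fun j => j ∈ S).map l.get

/-- `β_j = s_{i_1} ⋯ s_{i_{j-1}}(α_{i_j})` attached to a reduced word `l` -/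
noncomputable def refRoot (l : List D.I) (j : Fin l.length) : D.V :=
  D.act (D.wordProd (l.take j.val)) (D.simple (l.get j))

/-- the Weyl group is simply laced: the Cartan pairing is symmetric -/
def SimplyLaced : Prop :=
  ∀ i j, D.coroot (D.simple i) (D.simple j) = D.coroot (D.simple j) (D.simple i)

/-- generating relation of the heap order of the word `l`:
`p_j < p_k` whenever `j < k` and `s_{i_j}`, `s_{i_k}` do not commute -/
def heapCovers (l : List D.I) (j k : Fin l.length) : Prop :=
  (j : ℕ) < (k : ℕ) ∧ D.s (l.get j) * D.s (l.get k) ≠ D.s (l.get k) * D.s (l.get j)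

/-- the heap order of the word `l`: the minimal partial order generated by
`heapCovers` -/
def heapLE (l : List D.I) : Fin l.length → Fin l.length → Prop :=
  Relation.ReflTransGen (D.heapCovers l)

/-- strict heap order -/
def heapLT (l : List D.I) (j k : Fin l.length) : Prop := D.heapLE l j k ∧ j ≠ k

/-- `F` is an order filter of the heap `H(w)` of the word `l` -/
def IsHeapFilter (l : List D.I) (F : Finset (Fin l.length)) : Prop :=
  ∀ j k, j ∈ F → D.heapLE l j k → k ∈ F

/-- `i` and `j` are joined by an edge of the Dynkin diagram -/
def adjDynkin (i j : D.I) : Prop := i ≠ j ∧ D.s i * D.s j ≠ D.s j * D.s i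

/-- an elementary excitation `A ▷ B` of subsets of the heap of the word `l` -/
def Excite (l : List D.I) (A B : Finset (Fin l.length)) : Prop :=
  ∃ p q, D.heapLT l p q ∧ l.get p = l.get q ∧ q ∈ A ∧ p ∈ B ∧
    A.erase q = B.erase p ∧
    (∀ z, D.heapLT l p z → D.heapLT l z q → l.get z ≠ l.get p) ∧
    ∀ u ∈ A, D.heapLE l p u → D.heapLE l u q → ¬ D.adjDynkin (l.get p) (l.get u)

/-- `A` is an excited diagram of `F` in the heap of the word `l`,
i.e. `A ∈ E_{H(w)}(F)` -/
def InExcited (l : List D.I) (F A : Finset (Fin l.length)) : Prop :=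
  Relation.ReflTransGen (D.Excite l) F A

end WeylSetting
namespace WeylSetting

variable {D : WeylSetting}

lemma act_mul_apply (a b : D.W) (v : D.V) : D.act (a * b) v = D.act a (D.act b v) := by
  rw [map_mul]; rfl

lemma act_one_apply (v : D.V) : D.act (1 : D.W) v = v := by
  rw [map_one]; rfl

lemma act_inv_apply (g : D.W) (v : D.V) : D.act g⁻¹ (D.act g v) = v := by
  rw [← act_mul_apply, inv_mul_cancel, act_one_apply]

lemma act_inv_apply' (g : D.W) (v : D.V) : D.act g (D.act g⁻¹ v) = v := by
  rw [← act_mul_apply, mul_inv_cancel, act_one_apply]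

lemma act_ext {g h : D.W} (H : ∀ v, D.act g v = D.act h v) : g = h := by
  have : h⁻¹ * g = 1 := by
    apply D.act_faithful
    intro v
    rw [act_mul_apply, H v, act_inv_apply]
  have := congrArg (h * ·) this
  simpa [mul_assoc] using this

lemma root_ne_zero {β : D.V} (hβ : β ∈ D.roots) : β ≠ 0 := by
  intro h
  have h2 := D.coroot_self β hβ
  rw [h] at h2
  simp at h2

lemma coords_eq {f g : D.I → ℚ} (h : ∑ i, f i • D.simple i = ∑ i, g i • D.simple i) :
    ∀ i, f i = g i := by
  have h0 : ∑ i, (f i - g i) • D.simple i = 0 := by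
    simp [sub_smul, Finset.sum_sub_distrib, h]
  intro i
  have := Fintype.linearIndependent_iff.mp D.simple_indep (fun i => f i - g i) h0 i
  linarith

/-- positive-root coordinates (natural numbers) -/
lemma posRoot_coords {β : D.V} (hβ : D.IsPosRoot β) :
    β = ∑ i, (D.posCoeff β i : ℚ) • D.simple i :=
  D.posCoeff_spec β hβ.1 hβ.2

lemma posRoot_ne_zero {β : D.V} (hβ : D.IsPosRoot β) : β ≠ 0 := root_ne_zero hβ.1

lemma not_pos_of_neg_pos {β : D.V} (hβ : D.IsPosRoot β) : ¬ D.IsPosRoot (-β) := by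
  rintro ⟨hm, c, hc, hrep⟩
  obtain ⟨c', hc', hrep'⟩ := hβ.2
  have hsum : ∑ i, (c' i + c i) • D.simple i = ∑ i, (0 : ℚ) • D.simple i := by
    simp [add_smul, Finset.sum_add_distrib, ← hrep', ← hrep]
  have := coords_eq hsum
  have hz : ∀ i, c' i = 0 := by
    intro i
    have := this i
    have := hc i; have := hc' i
    simp at *
    linarith
  apply posRoot_ne_zero hβ
  rw [hrep']
  apply Finset.sum_eq_zero
  intro i _
  rw [hz i, zero_smul]

lemma root_dichotomy {β : D.V} (hβ : β ∈ D.roots) : D.IsPosRoot β ∨ D.IsPosRoot (-β) := by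
  rcases D.root_pos_or_neg β hβ with h | h
  · exact Or.inl ⟨hβ, h⟩
  · exact Or.inr ⟨D.roots_neg β hβ, h⟩

lemma srefl_apply' {β : D.V} (hβ : β ∈ D.roots) (v : D.V) :
    D.act (D.srefl β) v = v - D.coroot β v • β := D.srefl_apply β hβ v

lemma srefl_sq {β : D.V} (hβ : β ∈ D.roots) : D.srefl β * D.srefl β = 1 := by
  apply act_ext
  intro v
  rw [act_mul_apply, act_one_apply, srefl_apply' hβ, srefl_apply' hβ, map_sub, map_smul,
    D.coroot_self β hβ]
  simp only [smul_eq_mul, sub_smul, mul_smul]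
  abel_nf
  module

lemma srefl_self_apply {β : D.V} (hβ : β ∈ D.roots) : D.act (D.srefl β) β = -β := by
  rw [srefl_apply' hβ, D.coroot_self β hβ]
  module

lemma srefl_conj (g : D.W) {β : D.V} (hβ : β ∈ D.roots) :
    D.srefl (D.act g β) = g * D.srefl β * g⁻¹ := by
  apply act_ext
  intro v
  have hmem : D.act g β ∈ D.roots := D.roots_invariant g β hβ
  rw [srefl_apply' hmem, act_mul_apply, act_mul_apply, srefl_apply' hβ]
  rw [map_sub, map_smul, act_inv_apply']
  congr 2
  have := D.coroot_equivariant g β hβ (D.act g⁻¹ v)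
  rw [act_inv_apply'] at this
  rw [this]

end WeylSetting
namespace WeylSetting

variable {D : WeylSetting}

lemma coroot_smul {β : D.V} (hβ : β ∈ D.roots) {c : ℚ} (hc : c ≠ 0)
    (hm : c • β ∈ D.roots) (v : D.V) : D.coroot (c • β) v = c⁻¹ * D.coroot β v := by
  have hneg : -β ∈ D.roots := D.roots_neg β hβ
  have h2 : c * D.coroot (c • β) β = 2 := by
    have := D.coroot_self (c • β) hm
    rw [map_smul] at this
    simpa using this
  have hf'β : D.coroot (c • β) β = 2 / c := by
    rw [eq_div_iff hc]; linear_combination h2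
  have hactβ : D.act (D.srefl (c • β)) β = -β := by
    rw [srefl_apply' hm, hf'β, smul_smul]
    have hcc : 2 / c * c = 2 := by field_simp
    rw [hcc]
    module
  have hequiv1 : ∀ u, D.coroot (-β) (D.act (D.srefl (c • β)) u) = D.coroot β u := by
    intro u
    have := D.coroot_equivariant (D.srefl (c • β)) β hβ u
    rwa [hactβ] at this
  have hequiv2 : ∀ u, D.coroot (-β) (D.act (D.srefl β) u) = D.coroot β u := by
    intro u
    have := D.coroot_equivariant (D.srefl β) β hβ u
    rwa [srefl_self_apply hβ] at this
  have hdiff : D.act (D.srefl (c • β)) v - D.act (D.srefl β) v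
      = (D.coroot β v - c * D.coroot (c • β) v) • β := by
    rw [srefl_apply' hm, srefl_apply' hβ, smul_smul]
    module
  have hzero : D.coroot (-β) (D.act (D.srefl (c • β)) v - D.act (D.srefl β) v) = 0 := by
    rw [map_sub, hequiv1, hequiv2, sub_self]
  rw [hdiff, map_smul] at hzero
  have hc2 : D.coroot (-β) β = -2 := by
    have := D.coroot_self (-β) hneg
    rw [map_neg] at this
    linarith
  rw [hc2] at hzero
  simp only [smul_eq_mul] at hzero
  have hkey : D.coroot β v = c * D.coroot (c • β) v := by linarith
  rw [hkey]
  field_simp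

lemma srefl_smul {β : D.V} (hβ : β ∈ D.roots) {c : ℚ} (hc : c ≠ 0)
    (hm : c • β ∈ D.roots) : D.srefl (c • β) = D.srefl β := by
  apply act_ext
  intro v
  rw [srefl_apply' hm, srefl_apply' hβ, coroot_smul hβ hc hm, smul_smul]
  congr 2
  field_simp

lemma coroot_neg_apply {β : D.V} (hβ : β ∈ D.roots) (v : D.V) :
    D.coroot (-β) v = -(D.coroot β v) := by
  have hm : (-1 : ℚ) • β ∈ D.roots := by
    rw [neg_one_smul]; exact D.roots_neg β hβ
  have := coroot_smul hβ (by norm_num : (-1:ℚ) ≠ 0) hm v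
  rw [neg_one_smul] at this
  rw [this]; ring

lemma srefl_neg {β : D.V} (hβ : β ∈ D.roots) : D.srefl (-β) = D.srefl β := by
  have hm : (-1 : ℚ) • β ∈ D.roots := by
    rw [neg_one_smul]; exact D.roots_neg β hβ
  have := srefl_smul hβ (by norm_num : (-1:ℚ) ≠ 0) hm
  rwa [neg_one_smul] at this

lemma smul_eq_sum_ite (c : ℚ) (i : D.I) :
    ∑ k, (if k = i then c else 0) • D.simple k = c • D.simple i := by
  simp [ite_smul]

/-- if `β` is a positive root and not a positive multiple of `αᵢ`, then `sᵢ β` is positive -/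
lemma pos_after_simple {β : D.V} (hβ : D.IsPosRoot β) (i : D.I)
    (h : ¬∃ q : ℚ, 0 < q ∧ β = q • D.simple i) : D.IsPosRoot (D.act (D.s i) β) := by
  have hαi : D.simple i ∈ D.roots := D.simple_mem i
  have hmem : D.act (D.s i) β ∈ D.roots := D.roots_invariant _ β hβ.1
  rcases root_dichotomy hmem with hp | hp
  · exact hp
  · exfalso
    obtain ⟨_, c, hc, hrep⟩ := hp
    have hact : D.act (D.s i) β = β - D.coroot (D.simple i) β • D.simple i :=
      srefl_apply' hαi β
    set d := D.coroot (D.simple i) β with hd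
    have hn := posRoot_coords hβ
    rw [hact] at hrep
    have hβc : β + ∑ k, c k • D.simple k = d • D.simple i := by
      rw [← hrep]; abel
    have hsum : ∑ k, ((D.posCoeff β k : ℚ) + c k) • D.simple k
        = ∑ k, (if k = i then d else 0) • D.simple k := by
      calc ∑ k, ((D.posCoeff β k : ℚ) + c k) • D.simple k
          = (∑ k, (D.posCoeff β k : ℚ) • D.simple k) + ∑ k, c k • D.simple k := by
            simp [add_smul, Finset.sum_add_distrib]
        _ = β + ∑ k, c k • D.simple k := by rw [← hn]
        _ = d • D.simple i := hβc
        _ = ∑ k, (if k = i then d else 0) • D.simple k := (smul_eq_sum_ite d i).symm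
    have hco := coords_eq hsum
    have hz : ∀ k, k ≠ i → (D.posCoeff β k : ℚ) = 0 := by
      intro k hk
      have h1 := hco k
      rw [if_neg hk] at h1
      have h2 : (0:ℚ) ≤ (D.posCoeff β k : ℚ) := by positivity
      have h3 := hc k
      linarith
    have hβeq : β = (D.posCoeff β i : ℚ) • D.simple i := by
      conv_lhs => rw [hn]
      exact Finset.sum_eq_single_of_mem i (Finset.mem_univ i)
        (fun k _ hk => by rw [hz k hk, zero_smul])
    apply h
    refine ⟨(D.posCoeff β i : ℚ), ?_, hβeq⟩
    rcases Nat.eq_zero_or_pos (D.posCoeff β i) with h0 | h0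
    · exfalso
      apply posRoot_ne_zero hβ
      rw [hβeq, h0]; simp
    · exact_mod_cast h0

/-- a positive root which is a positive rational multiple of a simple root is a
positive natural multiple -/
lemma pos_mult_nat {β : D.V} (hβ : D.IsPosRoot β) {i : D.I} {q : ℚ}
    (hq : 0 < q) (heq : β = q • D.simple i) : ∃ n : ℕ, 0 < n ∧ q = (n : ℚ) := by
  have hn := posRoot_coords hβ
  have hsum : ∑ k, (D.posCoeff β k : ℚ) • D.simple k
      = ∑ k, (if k = i then q else 0) • D.simple k := by
    rw [smul_eq_sum_ite q i, ← hn, heq]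
  have hco := coords_eq hsum i
  rw [if_pos rfl] at hco
  refine ⟨D.posCoeff β i, ?_, hco.symm⟩
  by_contra h0
  push_neg at h0
  have h1 : D.posCoeff β i = 0 := by omega
  rw [h1, Nat.cast_zero] at hco
  linarith

lemma cartan_nonpos {i j : D.I} (hij : i ≠ j) :
    D.coroot (D.simple j) (D.simple i) ≤ 0 := by
  by_contra h
  push_neg at h
  set t := D.coroot (D.simple j) (D.simple i) with ht
  have hαi : D.simple i ∈ D.roots := D.simple_mem i
  have hαj : D.simple j ∈ D.roots := D.simple_mem j
  have hmem : D.act (D.s j) (D.simple i) ∈ D.roots := D.roots_invariant _ _ hαi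
  have hact : D.act (D.s j) (D.simple i) = D.simple i - t • D.simple j :=
    srefl_apply' hαj _
  have hrepx : D.simple i - t • D.simple j
      = ∑ k, ((if k = i then (1:ℚ) else 0) - (if k = j then t else 0)) • D.simple k := by
    simp only [sub_smul, Finset.sum_sub_distrib]
    rw [smul_eq_sum_ite (1:ℚ) i, smul_eq_sum_ite t j, one_smul]
  rcases root_dichotomy hmem with hp | hp
  · obtain ⟨_, c, hc, hrep⟩ := hp
    have h1 : ∑ k, c k • D.simple k
        = ∑ k, ((if k = i then (1:ℚ) else 0) - (if k = j then t else 0)) • D.simple k := by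
      rw [← hrep, hact]; exact hrepx
    have hco := coords_eq h1 j
    rw [if_neg (Ne.symm hij), if_pos rfl] at hco
    have := hc j
    linarith
  · obtain ⟨_, c, hc, hrep⟩ := hp
    rw [hact, neg_sub] at hrep
    have hrepy : t • D.simple j - D.simple i
        = ∑ k, ((if k = j then t else 0) - (if k = i then (1:ℚ) else 0)) • D.simple k := by
      simp only [sub_smul, Finset.sum_sub_distrib]
      rw [smul_eq_sum_ite (1:ℚ) i, smul_eq_sum_ite t j, one_smul]
    have h1 : ∑ k, c k • D.simple k
        = ∑ k, ((if k = j then t else 0) - (if k = i then (1:ℚ) else 0)) • D.simple k := by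
      rw [← hrep]; exact hrepy
    have hco := coords_eq h1 i
    rw [if_neg hij, if_pos rfl] at hco
    have := hc i
    linarith

end WeylSetting
namespace WeylSetting

/-- coordinates of the orbit of `γ` under powers of `s_β s_γ` -/
noncomputable def signSeq (k m : ℚ) : ℕ → ℚ × ℚ
  | 0 => (0, 1)
  | n+1 => ((k*m - 1) * (signSeq k m n).1 + k * (signSeq k m n).2,
            -m * (signSeq k m n).1 - (signSeq k m n).2)

/-- sign-normalized version of `signSeq` -/
noncomputable def posSeq (k q : ℚ) : ℕ → ℚ × ℚ
  | 0 => (0, 1)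
  | n+1 => ((1 + k*q) * (posSeq k q n).1 + k * (posSeq k q n).2,
            q * (posSeq k q n).1 + (posSeq k q n).2)

lemma signSeq_eq_posSeq (k q : ℚ) (n : ℕ) :
    signSeq k (-q) n = ((-1:ℚ)^(n+1) * (posSeq k q n).1, (-1:ℚ)^n * (posSeq k q n).2) := by
  induction n with
  | zero => simp [signSeq, posSeq]
  | succ n ih =>
    have e1 : (-1:ℚ)^(n+1) = -((-1:ℚ)^n) := by rw [pow_succ]; ring
    have e2 : (-1:ℚ)^(n+2) = (-1:ℚ)^n := by rw [pow_succ, pow_succ]; ring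
    have h1 : (signSeq k (-q) (n+1)).1
        = (k*(-q) - 1) * (signSeq k (-q) n).1 + k * (signSeq k (-q) n).2 := rfl
    have h2 : (signSeq k (-q) (n+1)).2
        = -(-q) * (signSeq k (-q) n).1 - (signSeq k (-q) n).2 := rfl
    have p1 : (posSeq k q (n+1)).1
        = (1 + k*q) * (posSeq k q n).1 + k * (posSeq k q n).2 := rfl
    have p2 : (posSeq k q (n+1)).2
        = q * (posSeq k q n).1 + (posSeq k q n).2 := rfl
    have c1 := congrArg Prod.fst ih
    have c2 := congrArg Prod.snd ih
    simp only at c1 c2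
    apply Prod.ext
    · simp only [h1, p1, c1, c2, e2, e1]
      ring
    · simp only [h2, p2, c1, c2, e1]
      ring

lemma posSeq_growth {k q : ℚ} (hk : 1 ≤ k) (hq : 0 ≤ q) (n : ℕ) :
    (n:ℚ) ≤ (posSeq k q n).1 ∧ 0 ≤ (posSeq k q n).1 ∧ 1 ≤ (posSeq k q n).2 := by
  induction n with
  | zero => norm_num [posSeq]
  | succ n ih =>
    obtain ⟨hn, hc, hd⟩ := ih
    have p1 : (posSeq k q (n+1)).1
        = (1 + k*q) * (posSeq k q n).1 + k * (posSeq k q n).2 := rfl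
    have p2 : (posSeq k q (n+1)).2
        = q * (posSeq k q n).1 + (posSeq k q n).2 := rfl
    have hkq : 0 ≤ k * q := by positivity
    have hkd : 1 ≤ k * (posSeq k q n).2 := by nlinarith
    have hqc : 0 ≤ q * (posSeq k q n).1 := by positivity
    have hkqc : 0 ≤ (k*q) * (posSeq k q n).1 := by positivity
    refine ⟨?_, ?_, ?_⟩
    · rw [p1]; push_cast; nlinarith
    · rw [p1]; nlinarith
    · rw [p2]; nlinarith

lemma posSeq_strictMono {k q : ℚ} (hk : 1 ≤ k) (hq : 0 ≤ q) :
    StrictMono (fun n => (posSeq k q n).1) := by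
  apply strictMono_nat_of_lt_succ
  intro n
  obtain ⟨hn, hc, hd⟩ := posSeq_growth hk hq n
  have p1 : (posSeq k q (n+1)).1
      = (1 + k*q) * (posSeq k q n).1 + k * (posSeq k q n).2 := rfl
  have hkq : 0 ≤ k * q := by positivity
  have hkqc : 0 ≤ (k*q) * (posSeq k q n).1 := by positivity
  have hkd : 1 ≤ k * (posSeq k q n).2 := by nlinarith
  show (posSeq k q n).1 < (posSeq k q (n+1)).1
  rw [p1]; nlinarith

variable {D : WeylSetting}

lemma signSeq_orbit {β γ : D.V} (hβ : β ∈ D.roots) (hγ : γ ∈ D.roots) (n : ℕ) :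
    D.act ((D.srefl β * D.srefl γ)^n) γ
      = (signSeq (D.coroot β γ) (D.coroot γ β) n).1 • β
        + (signSeq (D.coroot β γ) (D.coroot γ β) n).2 • γ := by
  set k := D.coroot β γ with hk
  set m := D.coroot γ β with hm
  induction n with
  | zero => simp [signSeq, act_one_apply]
  | succ n ih =>
    rw [pow_succ', act_mul_apply, ih, act_mul_apply]
    rw [srefl_apply' hγ, map_add, map_smul, map_smul]
    rw [srefl_apply' hβ]
    simp only [map_add, map_sub, map_smul, smul_eq_mul]
    rw [D.coroot_self γ hγ, D.coroot_self β hβ, ← hk, ← hm]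
    show _ = (signSeq k m (n+1)).1 • β + (signSeq k m (n+1)).2 • γ
    simp only [signSeq]
    match_scalars <;> ring

/-- sign symmetry of the crystallographic pairing -/
lemma sign_pos {β γ : D.V} (hβ : β ∈ D.roots) (hγ : γ ∈ D.roots)
    (hind : ∀ q : ℚ, γ ≠ q • β) (hk : 0 < D.coroot β γ) : 0 < D.coroot γ β := by
  by_contra hmneg
  push_neg at hmneg
  obtain ⟨K, hK⟩ := D.crystallographic β hβ γ hγ
  have hk1 : 1 ≤ D.coroot β γ := by
    rw [hK] at hk ⊢
    exact_mod_cast hk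
  set q : ℚ := -(D.coroot γ β) with hqdef
  have hq0 : 0 ≤ q := by rw [hqdef]; linarith
  have hmq : D.coroot γ β = -q := by rw [hqdef]; ring
  have hFroots : ∀ n : ℕ, D.act ((D.srefl β * D.srefl γ)^n) γ ∈ D.roots :=
    fun n => D.roots_invariant _ γ hγ
  have hcmono := posSeq_strictMono (q := q) hk1 hq0
  have habs : ∀ n, |(signSeq (D.coroot β γ) (-q) n).1| = (posSeq (D.coroot β γ) q n).1 := by
    intro n
    obtain ⟨_, h0, _⟩ := posSeq_growth (k := D.coroot β γ) (q := q) hk1 hq0 n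
    have := congrArg Prod.fst (signSeq_eq_posSeq (D.coroot β γ) q n)
    simp only at this
    rw [this, abs_mul, abs_pow, abs_neg, abs_one, one_pow, one_mul, abs_of_nonneg h0]
  have hFinj : Function.Injective
      (fun n : ℕ => D.act ((D.srefl β * D.srefl γ)^n) γ) := by
    intro n1 n2 hEq
    simp only at hEq
    have e1 := signSeq_orbit hβ hγ (D := D) n1
    have e2 := signSeq_orbit hβ hγ (D := D) n2
    rw [hmq] at e1 e2
    rw [e1, e2] at hEq
    set a1 := (signSeq (D.coroot β γ) (-q) n1).1 with ha1
    set b1 := (signSeq (D.coroot β γ) (-q) n1).2 with hb1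
    set a2 := (signSeq (D.coroot β γ) (-q) n2).1 with ha2
    set b2 := (signSeq (D.coroot β γ) (-q) n2).2 with hb2
    have hrel : (a1 - a2) • β = (b2 - b1) • γ := by
      rw [sub_smul, sub_smul, sub_eq_sub_iff_add_eq_add, add_comm (b2 • γ) (a2 • β)]
      exact hEq
    by_cases hb : b1 = b2
    · have hz : (a1 - a2) • β = 0 := by rw [hrel, hb, sub_self, zero_smul]
      have ha : a1 = a2 := by
        rcases smul_eq_zero.mp hz with h | h
        · linarith
        · exact absurd h (root_ne_zero hβ)
      have hcc : (posSeq (D.coroot β γ) q n1).1 = (posSeq (D.coroot β γ) q n2).1 := by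
        rw [← habs n1, ← habs n2]
        exact congrArg abs ha
      exact hcmono.injective hcc
    · exfalso
      apply hind ((b2 - b1)⁻¹ * (a1 - a2))
      have hbne : b2 - b1 ≠ 0 := fun h => hb (by linarith [sub_eq_zero.mp h])
      rw [mul_smul, hrel, smul_smul, inv_mul_cancel₀ hbne, one_smul]
  have hsub : Set.range (fun n : ℕ => D.act ((D.srefl β * D.srefl γ)^n) γ)
      ⊆ (D.roots : Set D.V) := by
    rintro x ⟨n, rfl⟩; exact hFroots n
  exact absurd (Set.Finite.subset D.roots.finite_toSet hsub)
    (Set.infinite_range_of_injective hFinj)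

end WeylSetting
namespace WeylSetting

variable {D : WeylSetting}

lemma wordProd_nil : D.wordProd [] = 1 := rfl

lemma wordProd_cons (i : D.I) (t : List D.I) :
    D.wordProd (i :: t) = D.s i * D.wordProd t := by
  simp [wordProd]

lemma wordProd_append (l1 l2 : List D.I) :
    D.wordProd (l1 ++ l2) = D.wordProd l1 * D.wordProd l2 := by
  simp [wordProd]

lemma simple_isPos (i : D.I) : D.IsPosRoot (D.simple i) := by
  refine ⟨D.simple_mem i, fun k => if k = i then 1 else 0, ?_, ?_⟩
  · intro k; by_cases h : k = i <;> simp [h]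
  · rw [smul_eq_sum_ite (1:ℚ) i, one_smul]

lemma s_sq (i : D.I) : D.s i * D.s i = 1 := srefl_sq (D.simple_mem i)

lemma s_inv (i : D.I) : (D.s i)⁻¹ = D.s i := by
  rw [← mul_eq_one_iff_inv_eq]
  exact s_sq i

lemma wordProd_reverse (l : List D.I) : D.wordProd l.reverse = (D.wordProd l)⁻¹ := by
  induction l with
  | nil => simp [wordProd]
  | cons i t ih =>
    rw [List.reverse_cons, wordProd_append, wordProd_cons, ih]
    simp [wordProd, mul_inv_rev, s_inv]

lemma length_le_of_word {g : D.W} {l : List D.I} (h : D.wordProd l = g) :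
    D.length g ≤ l.length :=
  Nat.sInf_le ⟨l, rfl, h⟩

lemma exists_reduced (g : D.W) : ∃ l : List D.I, l.length = D.length g ∧ D.wordProd l = g := by
  have hne : {n | ∃ l : List D.I, l.length = n ∧ D.wordProd l = g}.Nonempty := by
    obtain ⟨l, hl⟩ := D.generated g
    exact ⟨l.length, l, rfl, hl.symm⟩
  exact Nat.sInf_mem hne

lemma length_one : D.length (1 : D.W) = 0 :=
  Nat.eq_zero_of_le_zero (length_le_of_word (wordProd_nil))

lemma eq_one_of_length_eq_zero {g : D.W} (h : D.length g = 0) : g = 1 := by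
  obtain ⟨l, hlen, hP⟩ := exists_reduced g
  rw [h] at hlen
  rw [List.length_eq_zero_iff] at hlen
  rw [hlen] at hP
  exact hP.symm

lemma length_s_mul_le (i : D.I) (g : D.W) : D.length (D.s i * g) ≤ D.length g + 1 := by
  obtain ⟨l, hlen, hP⟩ := exists_reduced g
  have : D.wordProd (i :: l) = D.s i * g := by rw [wordProd_cons, hP]
  have h2 := length_le_of_word this
  simpa [hlen] using h2

lemma length_ge_sub (i : D.I) (g : D.W) : D.length g ≤ D.length (D.s i * g) + 1 := by
  have := length_s_mul_le i (D.s i * g)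
  rwa [← mul_assoc, s_sq, one_mul] at this

/-- Exchange-type lemma: if a positive root is sent to a negative root by `g`,
then right multiplication by its reflection shortens `g`. -/
lemma exchange {δ : D.V} (hδ : D.IsPosRoot δ) {g : D.W}
    (hneg : ¬ D.IsPosRoot (D.act g δ)) :
    D.length (g * D.srefl δ) < D.length g := by
  obtain ⟨l, hlen, hP⟩ := exists_reduced g
  set n := l.length with hn
  set pred : ℕ → Prop := fun m => ¬ D.IsPosRoot (D.act (D.wordProd (l.drop m)) δ) with hpred
  have hpred0 : pred 0 := by
    simp only [hpred, List.drop_zero, hP]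
    exact hneg
  have hpredn : ¬ pred n := by
    simp only [hpred, hn, List.drop_length, wordProd_nil, act_one_apply, not_not]
    exact hδ
  set M := Nat.findGreatest pred n with hM
  have hMspec : pred M := Nat.findGreatest_spec (Nat.zero_le n) hpred0
  have hMle : M ≤ n := Nat.findGreatest_le n
  have hMlt : M < n := lt_of_le_of_ne hMle (fun h => hpredn (h ▸ hMspec))
  have hvpos : D.IsPosRoot (D.act (D.wordProd (l.drop (M+1))) δ) := by
    by_contra hc
    exact Nat.findGreatest_is_greatest (Nat.lt_succ_self M) hMlt hc
  set i := l.get ⟨M, hMlt⟩ with hi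
  have hdrop : l.drop M = i :: l.drop (M+1) := by
    rw [hi]
    exact List.drop_eq_getElem_cons hMlt
  set g0 := D.wordProd (l.drop (M+1)) with hg0
  have hvM : D.act (D.wordProd (l.drop M)) δ = D.act (D.s i) (D.act g0 δ) := by
    rw [hdrop, wordProd_cons, act_mul_apply]
  have hnotposM : ¬ D.IsPosRoot (D.act (D.s i) (D.act g0 δ)) := by
    rw [← hvM]; exact hMspec
  have hmult : ∃ q : ℚ, 0 < q ∧ D.act g0 δ = q • D.simple i := by
    by_contra hc
    exact hnotposM (pos_after_simple hvpos i hc)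
  obtain ⟨q, hq, heq⟩ := hmult
  have hsmem : q • D.simple i ∈ D.roots := heq ▸ (D.roots_invariant g0 δ hδ.1)
  have hsrefl1 : D.srefl (D.act g0 δ) = D.s i := by
    rw [heq]
    exact srefl_smul (D.simple_mem i) (ne_of_gt hq) hsmem
  have hsrefl2 : D.srefl (D.act g0 δ) = g0 * D.srefl δ * g0⁻¹ := srefl_conj g0 hδ.1
  have hkey : g0 * D.srefl δ = D.s i * g0 := by
    rw [← hsrefl1, hsrefl2]
    group
  have hfact : g * D.srefl δ = D.wordProd (l.take M ++ l.drop (M+1)) := by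
    rw [wordProd_append]
    have : g = D.wordProd (l.take M) * D.wordProd (l.drop M) := by
      rw [← wordProd_append, List.take_append_drop, hP]
    rw [this, hdrop, wordProd_cons, ← hg0]
    rw [mul_assoc, mul_assoc, hkey, ← mul_assoc (D.s i), s_sq, one_mul]
  have hlen2 : (l.take M ++ l.drop (M+1)).length = n - 1 := by
    rw [List.length_append, List.length_take, List.length_drop]
    omega
  calc D.length (g * D.srefl δ) ≤ n - 1 := by
        rw [← hlen2]
        exact length_le_of_word hfact.symm
    _ < n := by omega
    _ = D.length g := hlen

lemma descent_left {i : D.I} {g : D.W}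
    (hneg : ¬ D.IsPosRoot (D.act g⁻¹ (D.simple i))) :
    D.length (D.s i * g) < D.length g := by
  have hroot : D.act g⁻¹ (D.simple i) ∈ D.roots := D.roots_invariant g⁻¹ _ (D.simple_mem i)
  rcases root_dichotomy hroot with hp | hp
  · exact absurd hp hneg
  · have hactneg : D.act g (-(D.act g⁻¹ (D.simple i))) = -(D.simple i) := by
      rw [map_neg, act_inv_apply']
    have hnpos : ¬ D.IsPosRoot (D.act g (-(D.act g⁻¹ (D.simple i)))) := by
      rw [hactneg]
      exact not_pos_of_neg_pos (simple_isPos i)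
    have := exchange hp hnpos
    have heq : g * D.srefl (-(D.act g⁻¹ (D.simple i))) = D.s i * g := by
      rw [srefl_neg hroot, srefl_conj g⁻¹ (D.simple_mem i)]
      show g * (g⁻¹ * D.s i * g⁻¹⁻¹) = D.s i * g
      group
    rwa [heq] at this

end WeylSetting
namespace WeylSetting

/-- the height functional: a linear functional taking value 1 on each simple root -/
noncomputable def htQ (D : WeylSetting) : D.V →ₗ[ℚ] ℚ :=
  ∑ i, (Module.Basis.extend ((linearIndepOn_id_range_iff D.simple_indep.injective).mpr D.simple_indep)).coord
        ⟨D.simple i, Module.Basis.subset_extend _ (Set.mem_range_self i)⟩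

variable {D : WeylSetting}

lemma s_self_apply (i : D.I) : D.act (D.s i) (D.simple i) = -(D.simple i) :=
  srefl_self_apply (D.simple_mem i)

lemma htQ_simple (j : D.I) : D.htQ (D.simple j) = 1 := by
  have hinj : Function.Injective D.simple := D.simple_indep.injective
  set hs := (linearIndepOn_id_range_iff D.simple_indep.injective).mpr D.simple_indep with hhs
  set b := Module.Basis.extend hs with hb
  have hmem : ∀ i : D.I, D.simple i ∈ hs.extend (Set.subset_univ _) :=
    fun i => Module.Basis.subset_extend _ (Set.mem_range_self i)
  have happly : D.htQ (D.simple j)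
      = ∑ i, b.coord ⟨D.simple i, hmem i⟩ (D.simple j) := by
    rw [htQ, LinearMap.sum_apply]
  rw [happly]
  have hrepr : ∀ i : D.I, b.coord ⟨D.simple i, hmem i⟩ (D.simple j)
      = if (⟨D.simple j, hmem j⟩ : hs.extend (Set.subset_univ _)) = ⟨D.simple i, hmem i⟩
        then 1 else 0 := by
    intro i
    have hbj : b ⟨D.simple j, hmem j⟩ = D.simple j :=
      Module.Basis.extend_apply_self hs ⟨D.simple j, hmem j⟩
    rw [Module.Basis.coord_apply]
    conv_lhs => rw [← hbj]
    rw [Module.Basis.repr_self, Finsupp.single_apply]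
  rw [Finset.sum_congr rfl (fun i _ => hrepr i)]
  have hsingle := Finset.sum_eq_single_of_mem
    (f := fun i => if (⟨D.simple j, hmem j⟩ : hs.extend (Set.subset_univ _))
        = ⟨D.simple i, hmem i⟩ then (1:ℚ) else 0)
    j (Finset.mem_univ j)
    (fun k _ hk => if_neg (fun hc => hk (hinj (congrArg Subtype.val hc)).symm))
  rw [hsingle]
  simp

lemma htQ_posRoot {β : D.V} (hβ : D.IsPosRoot β) :
    D.htQ β = ∑ i, (D.posCoeff β i : ℚ) := by
  conv_lhs => rw [posRoot_coords hβ]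
  rw [map_sum]
  congr 1
  funext i
  rw [map_smul, htQ_simple, smul_eq_mul, mul_one]

lemma htQ_posRoot_ge_one {β : D.V} (hβ : D.IsPosRoot β) : 1 ≤ D.htQ β := by
  rw [htQ_posRoot hβ]
  have hex : ∃ j, D.posCoeff β j ≠ 0 := by
    by_contra hc
    push_neg at hc
    apply posRoot_ne_zero hβ
    rw [posRoot_coords hβ]
    apply Finset.sum_eq_zero
    intro i _
    rw [hc i, Nat.cast_zero, zero_smul]
  obtain ⟨j, hj⟩ := hex
  have h1 : (1:ℚ) ≤ (D.posCoeff β j : ℚ) := by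
    have : 1 ≤ D.posCoeff β j := Nat.one_le_iff_ne_zero.mpr hj
    exact_mod_cast this
  calc (1:ℚ) ≤ (D.posCoeff β j : ℚ) := h1
    _ ≤ ∑ i, (D.posCoeff β i : ℚ) :=
        Finset.single_le_sum (f := fun i => (D.posCoeff β i : ℚ))
          (fun i _ => by positivity) (Finset.mem_univ j)

lemma simple_ne_smul {β : D.V} (hβ : D.IsPosRoot β) {i : D.I}
    (hnm : ¬∃ q : ℚ, 0 < q ∧ β = q • D.simple i) :
    ∀ q : ℚ, D.simple i ≠ q • β := by
  intro q h
  have hq0 : q ≠ 0 := by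
    rintro rfl
    rw [zero_smul] at h
    exact root_ne_zero (D.simple_mem i) h
  have hβeq : β = q⁻¹ • D.simple i := by
    rw [h, smul_smul, inv_mul_cancel₀ hq0, one_smul]
  rcases lt_trichotomy q⁻¹ 0 with hlt | hz | hgt
  · have hsum : ∑ k, (D.posCoeff β k : ℚ) • D.simple k
        = ∑ k, (if k = i then q⁻¹ else 0) • D.simple k := by
      rw [smul_eq_sum_ite q⁻¹ i, ← posRoot_coords hβ, hβeq]
    have := coords_eq hsum i
    rw [if_pos rfl] at this
    have h0 : (0:ℚ) ≤ (D.posCoeff β i : ℚ) := by positivity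
    linarith
  · exact hq0 (inv_eq_zero.mp hz)
  · exact hnm ⟨q⁻¹, hgt, hβeq⟩

/-- dominant weights pair nonnegatively with all positive coroots -/
lemma dominant_coroot_nonneg {pi : D.V} (hpi : D.IsDominant pi) :
    ∀ β, D.IsPosRoot β → 0 ≤ D.coroot β pi := by
  suffices H : ∀ N : ℕ, ∀ β, D.IsPosRoot β → (∑ i, D.posCoeff β i) ≤ N →
      0 ≤ D.coroot β pi by
    intro β hβ
    exact H (∑ i, D.posCoeff β i) β hβ le_rfl
  intro N
  induction N with
  | zero =>
    intro β hβ hht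
    exfalso
    have h1 := htQ_posRoot_ge_one hβ
    rw [htQ_posRoot hβ] at h1
    have : ∑ i, (D.posCoeff β i : ℚ) = ((∑ i, D.posCoeff β i : ℕ) : ℚ) := by push_cast; ring
    rw [this] at h1
    have hz : (∑ i, D.posCoeff β i) = 0 := Nat.le_zero.mp hht
    rw [hz] at h1
    norm_num at h1
  | succ N IH =>
    intro β hβ hht
    by_cases hmult : ∃ i, ∃ q : ℚ, 0 < q ∧ β = q • D.simple i
    · obtain ⟨i, q, hq, heq⟩ := hmult
      have hmem : q • D.simple i ∈ D.roots := heq ▸ hβ.1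
      have := coroot_smul (D.simple_mem i) (ne_of_gt hq) hmem pi
      rw [heq, this]
      have := hpi.2 i
      positivity
    · push_neg at hmult
      -- find j with posCoeff β j > 0 and coroot β αⱼ > 0
      have h2 : ∑ i, (D.posCoeff β i : ℚ) * D.coroot β (D.simple i) = 2 := by
        have h0 : D.coroot β (∑ i, (D.posCoeff β i : ℚ) • D.simple i) = 2 := by
          rw [← posRoot_coords hβ]
          exact D.coroot_self β hβ.1
        rw [map_sum] at h0
        simpa [smul_eq_mul] using h0
      have hex : ∃ j, 0 < D.posCoeff β j ∧ 0 < D.coroot β (D.simple j) := by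
        by_contra hc
        push_neg at hc
        have hle : ∀ j ∈ Finset.univ (α := D.I),
            (D.posCoeff β j : ℚ) * D.coroot β (D.simple j) ≤ 0 := by
          intro j _
          rcases Nat.eq_zero_or_pos (D.posCoeff β j) with h0 | h0
          · rw [h0]; norm_num
          · have := hc j h0
            have hcast : (0:ℚ) < (D.posCoeff β j : ℚ) := by exact_mod_cast h0
            nlinarith
        have := Finset.sum_nonpos hle
        rw [h2] at this
        norm_num at this
      obtain ⟨j, hj1, hj2⟩ := hex
      have hnm : ¬∃ q : ℚ, 0 < q ∧ β = q • D.simple j := fun ⟨q, hq, he⟩ => by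
        exact (hmult j) q hq he
      have hind := simple_ne_smul hβ hnm
      have ha : 0 < D.coroot (D.simple j) β :=
        sign_pos hβ.1 (D.simple_mem j) hind hj2
      obtain ⟨A, hA⟩ := D.crystallographic (D.simple j) (D.simple_mem j) β hβ.1
      have ha1 : 1 ≤ D.coroot (D.simple j) β := by
        rw [hA] at ha ⊢
        exact_mod_cast ha
      set β' := D.act (D.s j) β with hβ'
      have hβ'pos : D.IsPosRoot β' := pos_after_simple hβ j hnm
      have hβ'eq : β' = β - D.coroot (D.simple j) β • D.simple j :=
        srefl_apply' (D.simple_mem j) β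
      -- height decreases
      have hhtq : D.htQ β' = D.htQ β - D.coroot (D.simple j) β := by
        rw [hβ'eq, map_sub, map_smul, htQ_simple, smul_eq_mul, mul_one]
      have hhtlt : (∑ i, D.posCoeff β' i) ≤ N := by
        have e1 : ((∑ i, D.posCoeff β' i : ℕ) : ℚ) = D.htQ β' := by
          rw [htQ_posRoot hβ'pos]; push_cast; ring
        have e2 : ((∑ i, D.posCoeff β i : ℕ) : ℚ) = D.htQ β := by
          rw [htQ_posRoot hβ]; push_cast; ring
        have h3 : ((∑ i, D.posCoeff β' i : ℕ) : ℚ) + 1 ≤ ((∑ i, D.posCoeff β i : ℕ) : ℚ) := by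
          rw [e1, e2, hhtq]; linarith
        have hcast : (∑ i, D.posCoeff β' i) + 1 ≤ (∑ i, D.posCoeff β i) := by
          exact_mod_cast h3
        omega
      have hIH := IH β' hβ'pos hhtlt
      -- coroot β pi = coroot β' pi + coroot αⱼ pi * coroot αⱼ β ... 
      have hequiv : D.coroot β pi = D.coroot β' (D.act (D.s j) pi) := by
        have h1 := D.coroot_equivariant (D.s j) β hβ.1 pi
        rw [← hβ'] at h1
        exact h1.symm
      have hsj : D.act (D.s j) pi = pi - D.coroot (D.simple j) pi • D.simple j :=
        srefl_apply' (D.simple_mem j) pi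
      have hβ'αj : D.coroot β' (D.simple j) = -(D.coroot β (D.simple j)) := by
        have h1 := D.coroot_equivariant (D.s j) β hβ.1 (-(D.simple j))
        rw [← hβ', map_neg, s_self_apply j, neg_neg] at h1
        rw [h1, map_neg]
      have hfinal : D.coroot β pi
          = D.coroot β' pi + D.coroot (D.simple j) pi * D.coroot β (D.simple j) := by
        rw [hequiv, hsj, map_sub, map_smul, hβ'αj, smul_eq_mul]
        ring
      rw [hfinal]
      have := hpi.2 j
      nlinarith

lemma coroot_nonpos_of_neg {pi : D.V} (hpi : D.IsDominant pi) {γ : D.V}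
    (hγ : γ ∈ D.roots) (hnp : ¬ D.IsPosRoot γ) : D.coroot γ pi ≤ 0 := by
  rcases root_dichotomy hγ with h | h
  · exact absurd h hnp
  · have := dominant_coroot_nonneg hpi _ h
    rw [coroot_neg_apply hγ] at this
    linarith

end WeylSetting
namespace WeylSetting

variable {D : WeylSetting}

/-- the defining condition of a minuscule word (without reducedness) -/
def MinW (pi : D.V) (l : List D.I) : Prop :=
  ∀ k : Fin l.length,
    D.coroot (D.simple (l.get k)) (D.act (D.wordProd (l.drop (k.val + 1))) pi) = 1

lemma minW_nil (pi : D.V) : MinW pi ([] : List D.I) := fun k => absurd k.2 (by simp)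

lemma minW_head {pi : D.V} {i : D.I} {t : List D.I} (h : MinW pi (i :: t)) :
    D.coroot (D.simple i) (D.act (D.wordProd t) pi) = 1 := by
  have := h ⟨0, by simp⟩
  simpa using this

lemma minW_tail {pi : D.V} {i : D.I} {t : List D.I} (h : MinW pi (i :: t)) : MinW pi t := by
  intro k
  have := h ⟨k.val + 1, by simp [Nat.succ_lt_succ k.2]⟩
  simpa using this

lemma minW_cons {pi : D.V} {i : D.I} {t : List D.I}
    (h1 : D.coroot (D.simple i) (D.act (D.wordProd t) pi) = 1) (h2 : MinW pi t) :
    MinW pi (i :: t) := by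
  intro k
  rcases k with ⟨kv, hk⟩
  cases kv with
  | zero => simpa using h1
  | succ m =>
    have hm : m < t.length := by simpa using hk
    have := h2 ⟨m, hm⟩
    simpa using this

lemma act_s_s (i : D.I) (v : D.V) : D.act (D.s i) (D.act (D.s i) v) = v := by
  rw [← act_mul_apply, s_sq, act_one_apply]

lemma s_apply (i : D.I) (v : D.V) :
    D.act (D.s i) v = v - D.coroot (D.simple i) v • D.simple i :=
  srefl_apply' (D.simple_mem i) v

/-- weight formula for minuscule words -/
lemma minW_weight {pi : D.V} : ∀ {l : List D.I}, MinW pi l →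
    D.act (D.wordProd l) pi = pi - (l.map D.simple).sum := by
  intro l
  induction l with
  | nil => intro _; simp [wordProd_nil, act_one_apply]
  | cons i t ih =>
    intro h
    rw [wordProd_cons, act_mul_apply, s_apply, minW_head h, ih (minW_tail h)]
    simp only [List.map_cons, List.sum_cons, one_smul]
    abel

lemma htQ_simple_sum (l : List D.I) : D.htQ ((l.map D.simple).sum) = l.length := by
  induction l with
  | nil => simp
  | cons i t ih =>
    simp only [List.map_cons, List.sum_cons, map_add, htQ_simple, ih, List.length_cons]
    push_cast
    ring

lemma minW_htQ {pi : D.V} {l : List D.I} (h : MinW pi l) :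
    D.htQ (pi - D.act (D.wordProd l) pi) = l.length := by
  rw [minW_weight h]
  simp [htQ_simple_sum]

lemma coroot_act_inv (g : D.W) {β : D.V} (hβ : β ∈ D.roots) (v : D.V) :
    D.coroot β (D.act g v) = D.coroot (D.act g⁻¹ β) v := by
  have := D.coroot_equivariant g⁻¹ β hβ (D.act g v)
  rw [act_inv_apply] at this
  exact this.symm

/-- the pairing of a minuscule weight with the first simple reflection is -1 -/
lemma minW_head_pair {pi : D.V} {i : D.I} {t : List D.I} (h : MinW pi (i :: t)) :
    D.coroot (D.simple i) (D.act (D.wordProd (i :: t)) pi) = -1 := by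
  rw [wordProd_cons, act_mul_apply, s_apply, map_sub, map_smul,
    D.coroot_self _ (D.simple_mem i), minW_head h]
  simp
  norm_num

/-- KEY: elements representing a minuscule weight have length at least the word
length, with equality only for the word product itself. -/
lemma minW_min {pi : D.V} (hpi : D.IsDominant pi) :
    ∀ n : ℕ, ∀ g : D.W, D.length g ≤ n → ∀ l : List D.I, MinW pi l →
      D.act g pi = D.act (D.wordProd l) pi →
      l.length ≤ D.length g ∧ (D.length g = l.length → g = D.wordProd l) := by
  intro n
  induction n with
  | zero =>
    intro g hg l hmin heq
    have hg0 : D.length g = 0 := Nat.le_zero.mp hg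
    have hg1 : g = 1 := eq_one_of_length_eq_zero hg0
    rw [hg1, act_one_apply] at heq
    have hl : D.htQ (pi - D.act (D.wordProd l) pi) = l.length := minW_htQ hmin
    rw [← heq] at hl
    simp only [sub_self, map_zero] at hl
    have hl0 : l.length = 0 := by exact_mod_cast hl.symm
    constructor
    · omega
    · intro _
      rw [List.length_eq_zero_iff] at hl0
      rw [hl0, wordProd_nil, hg1]
  | succ n IH =>
    intro g hg l hmin heq
    cases l with
    | nil =>
      refine ⟨Nat.zero_le _, fun h0 => ?_⟩
      rw [wordProd_nil]
      exact eq_one_of_length_eq_zero h0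
    | cons i t =>
      have hpair : D.coroot (D.simple i) (D.act g pi) = -1 := by
        rw [heq]; exact minW_head_pair hmin
      have hδ : D.coroot (D.act g⁻¹ (D.simple i)) pi = -1 := by
        rw [← coroot_act_inv g (D.simple_mem i) pi]
        exact hpair
      have hδroot : D.act g⁻¹ (D.simple i) ∈ D.roots :=
        D.roots_invariant g⁻¹ _ (D.simple_mem i)
      have hδneg : ¬ D.IsPosRoot (D.act g⁻¹ (D.simple i)) := by
        intro hp
        have := dominant_coroot_nonneg hpi _ hp
        linarith
      have hdesc : D.length (D.s i * g) < D.length g := descent_left hδneg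
      set g' := D.s i * g with hg'
      have hg'len : D.length g' ≤ n := by omega
      have hact' : D.act g' pi = D.act (D.wordProd t) pi := by
        rw [hg', act_mul_apply, heq, wordProd_cons, act_mul_apply, act_s_s]
      obtain ⟨h1, h2⟩ := IH g' hg'len t (minW_tail hmin) hact'
      have hlen_eq : D.length g = D.length g' + 1 := by
        have := length_ge_sub i g
        rw [← hg'] at this
        omega
      constructor
      · simp only [List.length_cons]
        omega
      · intro h0
        simp only [List.length_cons] at h0
        have : D.length g' = t.length := by omega
        have hgt : g' = D.wordProd t := h2 this
        rw [wordProd_cons, ← hgt, hg', ← mul_assoc, s_sq, one_mul]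

lemma minW_length {pi : D.V} (hpi : D.IsDominant pi) {l : List D.I} (h : MinW pi l) :
    D.length (D.wordProd l) = l.length := by
  have := (minW_min hpi (D.length (D.wordProd l)) (D.wordProd l) le_rfl l h rfl).1
  have h2 := length_le_of_word (g := D.wordProd l) rfl
  omega

lemma stab_mem_iff (pi : D.V) (a b : D.W) :
    a⁻¹ * b ∈ D.stab pi ↔ D.act b pi = D.act a pi := by
  constructor
  · intro h
    have : D.act (a⁻¹ * b) pi = pi := h
    rw [act_mul_apply] at this
    have := congrArg (D.act a) this
    rwa [act_inv_apply'] at this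
  · intro h
    show D.act (a⁻¹ * b) pi = pi
    rw [act_mul_apply, h, act_inv_apply]

lemma minW_minRep {pi : D.V} (hpi : D.IsDominant pi) {l : List D.I} (h : MinW pi l) :
    D.IsMinRep (D.stab pi) (D.wordProd l) := by
  intro g hmem
  rw [stab_mem_iff] at hmem
  have := (minW_min hpi (D.length g) g le_rfl l h hmem).1
  rw [minW_length hpi h]
  omega

lemma minW_unique {pi : D.V} (hpi : D.IsDominant pi) {l : List D.I} (h : MinW pi l)
    {g : D.W} (hact : D.act g pi = D.act (D.wordProd l) pi)
    (hlen : D.length g = l.length) : g = D.wordProd l :=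
  (minW_min hpi (D.length g) g le_rfl l h hact).2 hlen

/-- pre-dominance of minuscule weights -/
lemma minW_predom {pi : D.V} (hpi : D.IsDominant pi) :
    ∀ l : List D.I, MinW pi l → ∀ β, D.IsPosRoot β →
      -1 ≤ D.coroot β (D.act (D.wordProd l) pi) := by
  intro l
  induction l with
  | nil =>
    intro _ β hβ
    rw [wordProd_nil, act_one_apply]
    have := dominant_coroot_nonneg hpi β hβ
    linarith
  | cons i t ih =>
    intro h β hβ
    by_cases hm : ∃ q : ℚ, 0 < q ∧ β = q • D.simple i
    · obtain ⟨q, hq, heq⟩ := hm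
      obtain ⟨nn, hnn, hqn⟩ := pos_mult_nat hβ hq heq
      have hmem : q • D.simple i ∈ D.roots := heq ▸ hβ.1
      have hc := coroot_smul (D.simple_mem i) (ne_of_gt hq) hmem
        (D.act (D.wordProd (i :: t)) pi)
      rw [heq, hc, minW_head_pair h]
      have hq1 : 1 ≤ q := by rw [hqn]; exact_mod_cast hnn
      have hinv : 0 < q⁻¹ := by positivity
      have : q⁻¹ ≤ 1 := by
        rw [inv_le_one_iff₀]; right; exact hq1
      nlinarith
    · have hβ' : D.IsPosRoot (D.act (D.s i) β) := pos_after_simple hβ i hm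
      have hequiv := D.coroot_equivariant (D.s i) β hβ.1 (D.act (D.wordProd (i :: t)) pi)
      have hactw : D.act (D.s i) (D.act (D.wordProd (i :: t)) pi)
          = D.act (D.wordProd t) pi := by
        rw [wordProd_cons, act_mul_apply, act_s_s]
      rw [hactw] at hequiv
      rw [← hequiv]
      exact ih (minW_tail h) _ hβ'

/-- integrality of pairings on the orbit of a dominant weight -/
lemma coroot_weight_int {pi : D.V} (hpi : D.IsDominant pi) (g : D.W) {β : D.V}
    (hβ : D.IsPosRoot β) : ∃ n : ℤ, D.coroot β (D.act g pi) = n := by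
  have hroot : D.act g⁻¹ β ∈ D.roots := D.roots_invariant g⁻¹ β hβ.1
  have heq : D.coroot β (D.act g pi) = D.coroot (D.act g⁻¹ β) pi :=
    coroot_act_inv g hβ.1 pi
  rcases root_dichotomy hroot with hp | hp
  · obtain ⟨n, hn⟩ := hpi.1 _ hp
    exact ⟨n, by rw [heq, hn]⟩
  · obtain ⟨n, hn⟩ := hpi.1 _ hp
    refine ⟨-n, ?_⟩
    rw [heq]
    rw [coroot_neg_apply hroot] at hn
    push_cast
    linarith

lemma bruhat_step {a b : D.W} {γ : D.V} (hγ : D.IsPosRoot γ) (heq : b = D.srefl γ * a)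
    (hlen : D.length a < D.length b) : D.bruhatLE a b :=
  Relation.ReflTransGen.single ⟨⟨γ, hγ, heq⟩, hlen⟩

lemma bruhatLE_length {a b : D.W} (h : D.bruhatLE a b) :
    D.length a ≤ D.length b ∧ (a ≠ b → D.length a < D.length b) := by
  induction h with
  | refl => exact ⟨le_rfl, fun h => absurd rfl h⟩
  | tail h1 h2 ih =>
    obtain ⟨_, hlt⟩ := h2
    exact ⟨le_of_lt (lt_of_le_of_lt ih.1 hlt), fun _ => lt_of_le_of_lt ih.1 hlt⟩

/-- height monotonicity along the Bruhat order (for a dominant weight) -/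
lemma bruhat_mono {pi : D.V} (hpi : D.IsDominant pi) {a b : D.W} (h : D.bruhatLE a b) :
    D.htQ (pi - D.act a pi) ≤ D.htQ (pi - D.act b pi) := by
  induction h with
  | refl => exact le_rfl
  | @tail b c h1 h2 ih =>
    refine le_trans ih ?_
    obtain ⟨⟨γ, hγ, heqc⟩, hlen⟩ := h2
    set δ := D.act b⁻¹ γ with hδ
    have hδroot : δ ∈ D.roots := D.roots_invariant b⁻¹ γ hγ.1
    have hδpos : D.IsPosRoot δ := by
      rcases root_dichotomy hδroot with hp | hp
      · exact hp
      · exfalso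
        have hactneg : D.act b (-δ) = -γ := by
          rw [map_neg, hδ, act_inv_apply']
        have hnp : ¬ D.IsPosRoot (D.act b (-δ)) := by
          rw [hactneg]; exact not_pos_of_neg_pos hγ
        have hex := exchange hp hnp
        have hfact : b * D.srefl (-δ) = c := by
          rw [srefl_neg hδroot, hδ, srefl_conj b⁻¹ hγ.1, heqc]
          group
        rw [hfact] at hex
        omega
    have hcor : D.coroot γ (D.act b pi) = D.coroot δ pi := by
      rw [coroot_act_inv b hγ.1 pi]
    have hc : D.act c pi = D.act b pi - D.coroot δ pi • γ := by
      rw [heqc, act_mul_apply, srefl_apply' hγ.1, hcor]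
    rw [hc]
    have hd : pi - (D.act b pi - D.coroot δ pi • γ)
        = (pi - D.act b pi) + D.coroot δ pi • γ := by abel
    rw [hd, map_add, map_smul, smul_eq_mul]
    have h1 := dominant_coroot_nonneg hpi δ hδpos
    have h2 := htQ_posRoot_ge_one hγ
    nlinarith

end WeylSetting
namespace WeylSetting

variable {D : WeylSetting}

lemma simple_ne_smul_simple {i j : D.I} (hij : i ≠ j) :
    ∀ q : ℚ, D.simple j ≠ q • D.simple i := by
  intro q h
  have hsum : ∑ k, (if k = j then (1:ℚ) else 0) • D.simple k
      = ∑ k, (if k = i then q else 0) • D.simple k := by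
    rw [smul_eq_sum_ite (1:ℚ) j, smul_eq_sum_ite q i, one_smul, h]
  have := coords_eq hsum j
  rw [if_pos rfl, if_neg (Ne.symm hij)] at this
  norm_num at this

lemma s_comm {i j : D.I} (hb : D.coroot (D.simple j) (D.simple i) = 0)
    (hb' : D.coroot (D.simple i) (D.simple j) = 0) :
    D.s i * D.s j = D.s j * D.s i := by
  apply act_ext
  intro v
  have key : ∀ (a b : D.I), D.coroot (D.simple a) (D.simple b) = 0 →
      D.act (D.s a) (D.act (D.s b) v)
        = v - D.coroot (D.simple b) v • D.simple b
            - D.coroot (D.simple a) v • D.simple a := by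
    intro a b hab
    rw [show D.act (D.s b) v = v - D.coroot (D.simple b) v • D.simple b from s_apply b v]
    rw [s_apply]
    rw [map_sub, map_smul, hab]
    simp
  rw [act_mul_apply, act_mul_apply, key i j hb', key j i hb]
  abel

/-- the coroot pairings of two distinct simple roots vanish together -/
lemma cartan_zero_iff {i j : D.I} (hij : i ≠ j)
    (hb : D.coroot (D.simple j) (D.simple i) = 0) :
    D.coroot (D.simple i) (D.simple j) = 0 := by
  rcases lt_trichotomy (D.coroot (D.simple i) (D.simple j)) 0 with hlt | hz | hgt
  · exfalso
    have hneg : -(D.simple j) ∈ D.roots := D.roots_neg _ (D.simple_mem j)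
    have hpos : 0 < D.coroot (D.simple i) (-(D.simple j)) := by
      rw [map_neg]; linarith
    have hind : ∀ q : ℚ, -(D.simple j) ≠ q • D.simple i := by
      intro q h
      exact simple_ne_smul_simple hij (-q)
        (by rw [neg_smul, ← h, neg_neg])
    have := sign_pos (D.simple_mem i) hneg hind hpos
    rw [coroot_neg_apply (D.simple_mem j)] at this
    linarith
  · exact hz
  · exfalso
    have := sign_pos (D.simple_mem i) (D.simple_mem j)
      (simple_ne_smul_simple hij) hgt
    linarith

/-- BASE: a simple-root arrow downward from a minuscule element is minuscule -/
lemma base {pi : D.V} (hpi : D.IsDominant pi) :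
    ∀ l : List D.I, MinW pi l → ∀ j : D.I,
      D.coroot (D.simple j) (D.act (D.wordProd l) pi) = -1 →
      ∃ m : List D.I, MinW pi m ∧ D.wordProd m = D.s j * D.wordProd l ∧
        m.length + 1 = l.length := by
  intro l
  induction l with
  | nil =>
    intro _ j hj
    exfalso
    rw [wordProd_nil, act_one_apply] at hj
    have := dominant_coroot_nonneg hpi _ (simple_isPos j)
    linarith
  | cons i t ih =>
    intro hmin j hj
    by_cases hij : j = i
    · subst hij
      refine ⟨t, minW_tail hmin, ?_, by simp⟩
      rw [wordProd_cons, ← mul_assoc, s_sq, one_mul]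
    · -- λ = λ' - αᵢ with ⟨λ', αᵢ∨⟩ = 1
      have hlam : D.act (D.wordProd (i :: t)) pi
          = D.act (D.wordProd t) pi - D.simple i := by
        rw [wordProd_cons, act_mul_apply, s_apply, minW_head hmin, one_smul]
      have hb0 : D.coroot (D.simple j) (D.act (D.wordProd t) pi)
          = -1 + D.coroot (D.simple j) (D.simple i) := by
        rw [hlam, map_sub] at hj
        linarith
      have hcart : D.coroot (D.simple j) (D.simple i) ≤ 0 :=
        cartan_nonpos (fun h => hij h.symm)
      have hpredom := minW_predom hpi t (minW_tail hmin) _ (simple_isPos j)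
      have hb : D.coroot (D.simple j) (D.simple i) = 0 := by
        rw [hb0] at hpredom
        linarith
      have hb' : D.coroot (D.simple i) (D.simple j) = 0 :=
        cartan_zero_iff (fun h => hij h.symm) hb
      have hlj : D.coroot (D.simple j) (D.act (D.wordProd t) pi) = -1 := by
        rw [hb0, hb]; ring
      obtain ⟨m', hm'min, hm'P, hm'len⟩ := ih (minW_tail hmin) j hlj
      refine ⟨i :: m', ?_, ?_, ?_⟩
      · apply minW_cons
        · have hact : D.act (D.wordProd m') pi
              = D.act (D.wordProd t) pi + D.simple j := by
            rw [hm'P, act_mul_apply, s_apply, hlj]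
            simp
          rw [hact, map_add, minW_head hmin, hb']
          ring
        · exact hm'min
      · rw [wordProd_cons, hm'P, wordProd_cons, ← mul_assoc, ← mul_assoc,
          s_comm hb hb']
      · simp only [List.length_cons]
        omega

lemma bruhatLT_of_words {pi : D.V} (hpi : D.IsDominant pi) {j : D.I}
    {m1 m2 : List D.I} (h1 : MinW pi m1) (h2 : MinW pi m2)
    (hP : D.wordProd m2 = D.s j * D.wordProd m1)
    (hlen : m2.length + 1 = m1.length) :
    D.bruhatLT (D.wordProd m2) (D.wordProd m1) := by
  have heq : D.wordProd m1 = D.srefl (D.simple j) * D.wordProd m2 := by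
    rw [hP]
    show _ = D.s j * _
    rw [← mul_assoc, s_sq, one_mul]
  have hl1 := minW_length hpi h1
  have hl2 := minW_length hpi h2
  have hlt : D.length (D.wordProd m2) < D.length (D.wordProd m1) := by omega
  refine ⟨bruhat_step (simple_isPos j) heq hlt, ?_⟩
  intro hcontr
  rw [hcontr] at hlt
  omega

lemma bruhatLT_trans {a b c : D.W} (h1 : D.bruhatLT a b) (h2 : D.bruhatLT b c) :
    D.bruhatLT a c := by
  refine ⟨h1.1.trans h2.1, ?_⟩
  have l1 := (bruhatLE_length h1.1).2 h1.2
  have l2 := (bruhatLE_length h2.1).1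
  intro hcontr
  rw [hcontr] at l1
  omega

lemma exists_simple_pos_pairing {β : D.V} (hβ : D.IsPosRoot β) :
    ∃ j, 0 < D.posCoeff β j ∧ 0 < D.coroot β (D.simple j) := by
  have h2 : ∑ i, (D.posCoeff β i : ℚ) * D.coroot β (D.simple i) = 2 := by
    have h0 : D.coroot β (∑ i, (D.posCoeff β i : ℚ) • D.simple i) = 2 := by
      rw [← posRoot_coords hβ]
      exact D.coroot_self β hβ.1
    rw [map_sum] at h0
    simpa [smul_eq_mul] using h0
  by_contra hc
  push_neg at hc
  have hle : ∀ j ∈ Finset.univ (α := D.I),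
      (D.posCoeff β j : ℚ) * D.coroot β (D.simple j) ≤ 0 := by
    intro j _
    rcases Nat.eq_zero_or_pos (D.posCoeff β j) with h0 | h0
    · rw [h0]; norm_num
    · have := hc j h0
      have hcast : (0:ℚ) < (D.posCoeff β j : ℚ) := by exact_mod_cast h0
      nlinarith
  have := Finset.sum_nonpos hle
  rw [h2] at this
  norm_num at this

/-- reflecting in a simple root with positive pairing decreases height -/
lemma reflect_simple_lt {β : D.V} (hβ : D.IsPosRoot β) {j : D.I}
    (hnm : ¬∃ q : ℚ, 0 < q ∧ β = q • D.simple j)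
    (hj2 : 0 < D.coroot β (D.simple j)) :
    D.IsPosRoot (D.act (D.s j) β) ∧ 1 ≤ D.coroot (D.simple j) β ∧
      (∑ i, D.posCoeff (D.act (D.s j) β) i) < ∑ i, D.posCoeff β i := by
  have hind := simple_ne_smul hβ hnm
  have ha : 0 < D.coroot (D.simple j) β :=
    sign_pos hβ.1 (D.simple_mem j) hind hj2
  obtain ⟨A, hA⟩ := D.crystallographic (D.simple j) (D.simple_mem j) β hβ.1
  have ha1 : 1 ≤ D.coroot (D.simple j) β := by
    rw [hA] at ha ⊢
    exact_mod_cast ha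
  have hβ'pos : D.IsPosRoot (D.act (D.s j) β) := pos_after_simple hβ j hnm
  refine ⟨hβ'pos, ha1, ?_⟩
  have hβ'eq : D.act (D.s j) β = β - D.coroot (D.simple j) β • D.simple j :=
    s_apply j β
  have hhtq : D.htQ (D.act (D.s j) β) = D.htQ β - D.coroot (D.simple j) β := by
    rw [hβ'eq, map_sub, map_smul, htQ_simple, smul_eq_mul, mul_one]
  have e1 : ((∑ i, D.posCoeff (D.act (D.s j) β) i : ℕ) : ℚ) = D.htQ (D.act (D.s j) β) := by
    rw [htQ_posRoot hβ'pos]; push_cast; ring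
  have e2 : ((∑ i, D.posCoeff β i : ℕ) : ℚ) = D.htQ β := by
    rw [htQ_posRoot hβ]; push_cast; ring
  have h3 : ((∑ i, D.posCoeff (D.act (D.s j) β) i : ℕ) : ℚ) + 1
      ≤ ((∑ i, D.posCoeff β i : ℕ) : ℚ) := by
    rw [e1, e2, hhtq]; linarith
  have : (∑ i, D.posCoeff (D.act (D.s j) β) i) + 1 ≤ ∑ i, D.posCoeff β i := by
    exact_mod_cast h3
  omega

end WeylSetting
namespace WeylSetting

variable {D : WeylSetting}

/-- MAIN: if `⟨w·π, β∨⟩ = -1` for a minuscule `w` and positive root `β`, then there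
is a minuscule element `v` with `v·π = w·π + β` and `v < w` in Bruhat order. -/
lemma main {pi : D.V} (hpi : D.IsDominant pi) :
    ∀ N : ℕ, ∀ β : D.V, D.IsPosRoot β → (∑ i, D.posCoeff β i) ≤ N →
    ∀ l : List D.I, MinW pi l →
      D.coroot β (D.act (D.wordProd l) pi) = -1 →
      ∃ m : List D.I, MinW pi m ∧
        D.act (D.wordProd m) pi = D.act (D.wordProd l) pi + β ∧
        D.bruhatLT (D.wordProd m) (D.wordProd l) := by
  intro N
  induction N with
  | zero =>
    intro β hβ hht l _ _
    exfalso
    have h1 := htQ_posRoot_ge_one hβ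
    rw [htQ_posRoot hβ] at h1
    have hz : (∑ i, D.posCoeff β i) = 0 := Nat.le_zero.mp hht
    have : ((∑ i, D.posCoeff β i : ℕ) : ℚ) = ∑ i, (D.posCoeff β i : ℚ) := by push_cast; ring
    rw [← this, hz] at h1
    norm_num at h1
  | succ N IH =>
    intro β hβ hht l hminl hco
    by_cases hmult : ∃ i, ∃ q : ℚ, 0 < q ∧ β = q • D.simple i
    · -- β is a multiple of a simple root; it must be the simple root itself
      obtain ⟨i, q, hq, heqβ⟩ := hmult
      have hmem : q • D.simple i ∈ D.roots := heqβ ▸ hβ.1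
      have hcs := coroot_smul (D.simple_mem i) (ne_of_gt hq) hmem
        (D.act (D.wordProd l) pi)
      have hcoi : D.coroot (D.simple i) (D.act (D.wordProd l) pi) = -q := by
        rw [heqβ, hcs] at hco
        field_simp at hco
        linarith
      obtain ⟨nn, hnn, hqn⟩ := pos_mult_nat hβ hq heqβ
      have hpre := minW_predom hpi l hminl _ (simple_isPos i)
      have hq1 : q = 1 := by
        rw [hcoi] at hpre
        have h1 : (1:ℚ) ≤ q := by rw [hqn]; exact_mod_cast hnn
        linarith
      have hβeq : β = D.simple i := by rw [heqβ, hq1, one_smul]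
      have hcoi1 : D.coroot (D.simple i) (D.act (D.wordProd l) pi) = -1 := by
        rw [hcoi, hq1]
      obtain ⟨m, hmmin, hmP, hmlen⟩ := base hpi l hminl i hcoi1
      refine ⟨m, hmmin, ?_, ?_⟩
      · rw [hmP, act_mul_apply, s_apply, hcoi1, hβeq]
        module
      · exact bruhatLT_of_words hpi hminl hmmin hmP hmlen
    · push_neg at hmult
      obtain ⟨j, _, hj2⟩ := exists_simple_pos_pairing hβ
      have hnmj : ¬∃ q : ℚ, 0 < q ∧ β = q • D.simple j := by
        rintro ⟨q, hq, he⟩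
        exact hmult j q hq he
      obtain ⟨hβ'pos, ha1, hhtlt⟩ := reflect_simple_lt hβ hnmj hj2
      have hhtN : (∑ i, D.posCoeff (D.act (D.s j) β) i) ≤ N := by omega
      have hβ'eq : D.act (D.s j) β = β - D.coroot (D.simple j) β • D.simple j :=
        s_apply j β
      have hβ'root : D.act (D.s j) β ∈ D.roots := hβ'pos.1
      have hco_b'_aj : D.coroot (D.simple j) (D.act (D.s j) β)
          = -(D.coroot (D.simple j) β) := by
        rw [hβ'eq, map_sub, map_smul, D.coroot_self _ (D.simple_mem j), smul_eq_mul]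
        ring
      obtain ⟨n, hn⟩ := coroot_weight_int hpi (D.wordProd l) (simple_isPos j)
      have hcjm1 : -1 ≤ D.coroot (D.simple j) (D.act (D.wordProd l) pi) :=
        minW_predom hpi l hminl _ (simple_isPos j)
      have hequiv : D.coroot (D.act (D.s j) β)
          (D.act (D.s j) (D.act (D.wordProd l) pi)) = -1 := by
        rw [D.coroot_equivariant (D.s j) β hβ.1 (D.act (D.wordProd l) pi), hco]
      have hsjlam : D.act (D.s j) (D.act (D.wordProd l) pi)
          = D.act (D.wordProd l) pi
            - D.coroot (D.simple j) (D.act (D.wordProd l) pi) • D.simple j :=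
        s_apply j _
      have hb'_at_aj : D.coroot (D.act (D.s j) β) (D.simple j)
          = -(D.coroot β (D.simple j)) := by
        have h1 := D.coroot_equivariant (D.s j) β hβ.1 (-(D.simple j))
        rw [map_neg, s_self_apply j, neg_neg] at h1
        rw [h1, map_neg]
      have hb'lam : D.coroot (D.act (D.s j) β) (D.act (D.wordProd l) pi)
          = -1 - D.coroot (D.simple j) (D.act (D.wordProd l) pi)
              * D.coroot β (D.simple j) := by
        rw [hsjlam, map_sub, map_smul, hb'_at_aj, smul_eq_mul] at hequiv
        linarith
      have hn1 : (-1 : ℤ) ≤ n := by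
        have := hcjm1
        rw [hn] at this
        exact_mod_cast this
      have hpre_b' := minW_predom hpi l hminl _ hβ'pos
      rcases (by omega : n = -1 ∨ n = 0 ∨ 1 ≤ n) with hcase | hcase | hcase
      · -- cj = -1 : first descend along αⱼ
        have hcoj : D.coroot (D.simple j) (D.act (D.wordProd l) pi) = -1 := by
          rw [hn, hcase]; norm_num
        obtain ⟨mm, hmm_min, hmmP, hmmlen⟩ := base hpi l hminl j hcoj
        have hltmm : D.bruhatLT (D.wordProd mm) (D.wordProd l) :=
          bruhatLT_of_words hpi hminl hmm_min hmmP hmmlen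
        have hνact : D.act (D.wordProd mm) pi
            = D.act (D.s j) (D.act (D.wordProd l) pi) := by
          rw [hmmP, act_mul_apply]
        have hν : D.act (D.wordProd mm) pi
            = D.act (D.wordProd l) pi + D.simple j := by
          rw [hνact, hsjlam, hcoj]
          module
        have hb'ν : D.coroot (D.act (D.s j) β) (D.act (D.wordProd mm) pi) = -1 := by
          rw [hνact]
          exact hequiv
        obtain ⟨m2, hm2min, hm2w, hm2lt⟩ := IH _ hβ'pos hhtN mm hmm_min hb'ν
        have hltm2l : D.bruhatLT (D.wordProd m2) (D.wordProd l) :=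
          bruhatLT_trans hm2lt hltmm
        -- pairing of αⱼ with the new weight is 1 - a
        have hpair2 : D.coroot (D.simple j) (D.act (D.wordProd m2) pi)
            = 1 - D.coroot (D.simple j) β := by
          rw [hm2w, map_add, hν, map_add, hcoj, D.coroot_self _ (D.simple_mem j),
            hco_b'_aj]
          ring
        obtain ⟨A, hA⟩ := D.crystallographic (D.simple j) (D.simple_mem j) β hβ.1
        have hA1 : 1 ≤ A := by
          rw [hA] at ha1; exact_mod_cast ha1
        have hpre2 := minW_predom hpi m2 hm2min _ (simple_isPos j)
        have hA2 : A ≤ 2 := by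
          rw [hpair2, hA] at hpre2
          have : (A : ℚ) ≤ 2 := by linarith
          exact_mod_cast this
        rcases (by omega : A = 1 ∨ A = 2) with hA' | hA'
        · -- a = 1 : done with m2
          have haq : D.coroot (D.simple j) β = 1 := by rw [hA, hA']; norm_num
          refine ⟨m2, hm2min, ?_, hltm2l⟩
          rw [hm2w, hν, hβ'eq, haq]
          module
        · -- a = 2 : one more descent along αⱼ
          have haq : D.coroot (D.simple j) β = 2 := by rw [hA, hA']; norm_num
          have hpair2' : D.coroot (D.simple j) (D.act (D.wordProd m2) pi) = -1 := by
            rw [hpair2, haq]; norm_num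
          obtain ⟨m3, hm3min, hm3P, hm3len⟩ := base hpi m2 hm2min j hpair2'
          refine ⟨m3, hm3min, ?_, ?_⟩
          · rw [hm3P, act_mul_apply, s_apply, hpair2', hm2w, hν, hβ'eq, haq]
            module
          · exact bruhatLT_trans
              (bruhatLT_of_words hpi hm2min hm3min hm3P hm3len) hltm2l
      · -- cj = 0
        have hcoj : D.coroot (D.simple j) (D.act (D.wordProd l) pi) = 0 := by
          rw [hn, hcase]; norm_num
        have hb'lam0 : D.coroot (D.act (D.s j) β) (D.act (D.wordProd l) pi) = -1 := by
          rw [hb'lam, hcoj]; ring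
        obtain ⟨m2, hm2min, hm2w, hm2lt⟩ := IH _ hβ'pos hhtN l hminl hb'lam0
        have hpair2 : D.coroot (D.simple j) (D.act (D.wordProd m2) pi)
            = -(D.coroot (D.simple j) β) := by
          rw [hm2w, map_add, hcoj, hco_b'_aj]
          ring
        have hpre2 := minW_predom hpi m2 hm2min _ (simple_isPos j)
        have haq : D.coroot (D.simple j) β = 1 := by
          rw [hpair2] at hpre2
          obtain ⟨A, hA⟩ := D.crystallographic (D.simple j) (D.simple_mem j) β hβ.1
          have hA1 : 1 ≤ A := by rw [hA] at ha1; exact_mod_cast ha1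
          have hA2 : A ≤ 1 := by
            have h9 : (A:ℚ) ≤ 1 := by rw [hA] at hpre2; linarith
            exact_mod_cast h9
          have : A = 1 := by omega
          rw [hA, this]; norm_num
        have hpair2' : D.coroot (D.simple j) (D.act (D.wordProd m2) pi) = -1 := by
          rw [hpair2, haq]
        obtain ⟨m3, hm3min, hm3P, hm3len⟩ := base hpi m2 hm2min j hpair2'
        refine ⟨m3, hm3min, ?_, ?_⟩
        · rw [hm3P, act_mul_apply, s_apply, hpair2', hm2w, hβ'eq, haq]
          module
        · exact bruhatLT_trans
            (bruhatLT_of_words hpi hm2min hm3min hm3P hm3len) hm2lt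
      · -- cj ≥ 1 : impossible
        exfalso
        have hcj1 : 1 ≤ D.coroot (D.simple j) (D.act (D.wordProd l) pi) := by
          rw [hn]
          exact_mod_cast hcase
        obtain ⟨K, hK⟩ := D.crystallographic β hβ.1 (D.simple j) (D.simple_mem j)
        have hK1 : 1 ≤ D.coroot β (D.simple j) := by
          rw [hK] at hj2 ⊢
          exact_mod_cast hj2
        have : D.coroot (D.act (D.s j) β) (D.act (D.wordProd l) pi) ≤ -2 := by
          rw [hb'lam]
          nlinarith
        linarith

end WeylSetting
open WeylSetting

/-- Let `π` be dominant integral, `w` a `π`-minuscule element, `λ = w(π)`, and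
for a positive root `β` let `u ∈ W^π` be the minimal-length representative of
`s_β w W_π`. Then (a) `λ →β s_β(λ)` (i.e. `⟨λ, β∨⟩ = -1`) iff `u →β w`; and
(b) if `u →β w` then `u` is also `π`-minuscule. -/
theorem minuscule_arrow_iff
    (D : WeylSetting) (pi : D.V) (hpi : D.IsDominant pi)
    (w : D.W) (hw : D.IsMinuscule pi w) (β : D.V) (hβ : D.IsPosRoot β)
    (u : D.W) (hu : D.IsMinRep (D.stab pi) u)
    (hcoset : D.SameCoset (D.stab pi) (D.srefl β * w) u) :
    (D.coroot β (D.act w pi) = -1 ↔ D.Arrow (D.stab pi) u w β) ∧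
    (D.Arrow (D.stab pi) u w β → D.IsMinuscule pi u) := by
  obtain ⟨l, ⟨hPl, hllen⟩, hlcond⟩ := hw
  have hminl : MinW pi l := hlcond
  have hu_act : D.act u pi = D.act (D.srefl β * w) pi :=
    (stab_mem_iff pi _ u).mp hcoset
  have forward : D.coroot β (D.act w pi) = -1 →
      (∃ m : List D.I, MinW pi m ∧ D.wordProd m = u) ∧ D.Arrow (D.stab pi) u w β := by
    intro hc
    obtain ⟨m, hmmin, hmw, hmlt⟩ := main hpi (∑ i, D.posCoeff β i) β hβ le_rfl l hminl
      (by rw [hPl]; exact hc)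
    rw [hPl] at hmw hmlt
    have humw : D.act u pi = D.act (D.wordProd m) pi := by
      rw [hu_act, act_mul_apply, srefl_apply' hβ.1, hc, hmw]
      module
    have hlen_le : D.length u ≤ D.length (D.wordProd m) := by
      apply hu
      rw [stab_mem_iff]
      exact humw.symm
    have hlen_ge : m.length ≤ D.length u :=
      (minW_min hpi (D.length u) u le_rfl m hmmin humw).1
    have hlen_eq : D.length u = m.length := by
      have := minW_length hpi hmmin
      omega
    have hueq : u = D.wordProd m := minW_unique hpi hmmin humw hlen_eq
    constructor
    · exact ⟨m, hmmin, hueq.symm⟩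
    · refine ⟨hβ, hu, ?_, hcoset, ?_⟩
      · have := minW_minRep hpi hminl
        rwa [hPl] at this
      · rw [hueq]; exact hmlt
  have backward : D.Arrow (D.stab pi) u w β → D.coroot β (D.act w pi) = -1 := by
    rintro ⟨_, _, hwmr, _, hult⟩
    obtain ⟨n, hn⟩ := coroot_weight_int hpi w hβ
    have hpredom : -1 ≤ D.coroot β (D.act w pi) := by
      have := minW_predom hpi l hminl β hβ
      rwa [hPl] at this
    have hn1 : (-1:ℤ) ≤ n := by
      rw [hn] at hpredom
      exact_mod_cast hpredom
    have hlult : D.length u < D.length w := (bruhatLE_length hult.1).2 hult.2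
    have hupi : D.act u pi = D.act w pi - D.coroot β (D.act w pi) • β := by
      rw [hu_act, act_mul_apply, srefl_apply' hβ.1]
    rcases (by omega : n = -1 ∨ n = 0 ∨ 1 ≤ n) with h0 | h0 | h0
    · rw [hn, h0]; norm_num
    · exfalso
      have hzz : D.coroot β (D.act w pi) = 0 := by rw [hn, h0]; norm_num
      have heqact : D.act u pi = D.act w pi := by
        rw [hupi, hzz, zero_smul, sub_zero]
      have hmem : w⁻¹ * u ∈ D.stab pi := (stab_mem_iff pi w u).mpr heqact
      have := hwmr u hmem
      omega
    · exfalso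
      have hmono := bruhat_mono hpi hult.1
      have hdiff : pi - D.act u pi
          = (pi - D.act w pi) + D.coroot β (D.act w pi) • β := by
        rw [hupi]; abel
      rw [hdiff, map_add, map_smul, smul_eq_mul] at hmono
      have h1 : 1 ≤ D.coroot β (D.act w pi) := by
        rw [hn]; exact_mod_cast h0
      have h2 := htQ_posRoot_ge_one hβ
      nlinarith
  refine ⟨⟨fun hc => (forward hc).2, backward⟩, fun hArr => ?_⟩
  obtain ⟨⟨m, hmmin, hmu⟩, _⟩ := forward (backward hArr)
  refine ⟨m, ⟨hmu, ?_⟩, hmmin⟩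
  rw [← hmu]
  exact (minW_length hpi hmmin).symm
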